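/- (Unconditional Stein–Chen bound.) Let B_0,…,B_n be mutually independent events in a probability space (Ω, 𝓕, ℙ), set W := Σ_{i=0}^{n} 1_{B_i} and λ := Σ_{i=0}^{n} ℙ(B_i). Then for every A ⊆ ℕ: |ℙ({W ∈ A}) − Po(A;λ)| ≤ max_{0≤i≤n} ℙ(B_i). -/

import Mathlib

open scoped BigOperators

/-- Poisson pmf: Po(k;lam) = lam^k * e^(-lam) / k!  (with the convention 0^0 = 1). -/
noncomputable def Po (k : ℕ) (lam : ℝ) : ℝ := lam ^ k * Real.exp (-lam) / (Nat.factorial k)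

/-- Poisson measure of a set A of naturals: Po(A;lam) = sum over k in A of Po(k;lam). -/
noncomputable def PoSet (A : Set ℕ) (lam : ℝ) : ℝ := ∑' k : A, Po k lam

/-- The scalar Stein-Chen solution g(j,lam,A), defined recursively by g(0,lam,A) = 0 and
g(j,lam,A) = lam⁻¹ * ((j-1)*g(j-1,lam,A) + 1_A(j-1) - Po(A;lam))
             + (1/j) * 1_{lam=0} * (1_A(0) - 1_A(j)) for j ≥ 1,
with the convention 0⁻¹ = 0. -/
noncomputable def steinChen : ℕ → ℝ → Set ℕ → ℝ
  | 0, _, _ => 0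
  | (j + 1), lam, A =>
      lam⁻¹ * ((j : ℝ) * steinChen j lam A
          + A.indicator (fun _ => (1 : ℝ)) j - PoSet A lam)
        + (1 / ((j : ℝ) + 1)) * (if lam = 0 then (1 : ℝ) else 0)
          * (A.indicator (fun _ => (1 : ℝ)) 0 - A.indicator (fun _ => (1 : ℝ)) (j + 1))

open MeasureTheory

namespace SCaux

variable {lam : ℝ} {A : Set ℕ}

/-- a m = lam^m / m! -/
noncomputable def aa (lam : ℝ) (m : ℕ) : ℝ := lam ^ m / (Nat.factorial m)

noncomputable def indA (A : Set ℕ) (m : ℕ) : ℝ := A.indicator (fun _ => (1 : ℝ)) m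

noncomputable def fA (lam : ℝ) (A : Set ℕ) (m : ℕ) : ℝ := indA A m * aa lam m

lemma indA_nonneg (A m) : 0 ≤ indA A m := by
  classical
  unfold indA; rw [Set.indicator_apply]; split <;> norm_num

lemma indA_le_one (A m) : indA A m ≤ 1 := by
  classical
  unfold indA; rw [Set.indicator_apply]; split <;> norm_num

lemma aa_nonneg (hl : 0 ≤ lam) (m : ℕ) : 0 ≤ aa lam m :=
  div_nonneg (pow_nonneg hl m) (by positivity)

lemma summable_aa (lam : ℝ) : Summable (aa lam) := Real.summable_pow_div_factorial lam

lemma summable_fA (hl : 0 ≤ lam) (A : Set ℕ) : Summable (fA lam A) := by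
  refine Summable.of_nonneg_of_le (fun m => mul_nonneg (indA_nonneg A m) (aa_nonneg hl m))
    (fun m => ?_) (summable_aa lam)
  calc indA A m * aa lam m ≤ 1 * aa lam m :=
        mul_le_mul_of_nonneg_right (indA_le_one A m) (aa_nonneg hl m)
    _ = aa lam m := one_mul _

lemma tsum_aa (hl : 0 ≤ lam) : ∑' m, aa lam m = Real.exp lam := by
  rw [Real.exp_eq_exp_ℝ, NormedSpace.exp_eq_tsum_div]
  rfl

/-- partial sums -/
noncomputable def S (lam : ℝ) (j : ℕ) : ℝ := ∑ m ∈ Finset.range (j + 1), aa lam m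

noncomputable def R (lam : ℝ) (j : ℕ) : ℝ := ∑' m, aa lam (m + (j + 1))

noncomputable def psi (lam : ℝ) (A : Set ℕ) (j : ℕ) : ℝ := ∑ m ∈ Finset.range (j + 1), fA lam A m

noncomputable def tau (lam : ℝ) (A : Set ℕ) (j : ℕ) : ℝ := ∑' m, fA lam A (m + (j + 1))

lemma S_add_R (hl : 0 ≤ lam) (j : ℕ) : S lam j + R lam j = Real.exp lam := by
  rw [← tsum_aa hl, ← Summable.sum_add_tsum_nat_add' ((summable_nat_add_iff (j + 1)).2 (summable_aa lam))]
  rfl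

lemma psi_add_tau (hl : 0 ≤ lam) (j : ℕ) :
    psi lam A j + tau lam A j = ∑' m, fA lam A m := by
  rw [← Summable.sum_add_tsum_nat_add' ((summable_nat_add_iff (j + 1)).2 (summable_fA hl A))]
  rfl

lemma PoSet_eq (hl : 0 ≤ lam) (A : Set ℕ) :
    PoSet A lam = Real.exp (-lam) * ∑' m, fA lam A m := by
  classical
  unfold PoSet
  rw [tsum_subtype A (fun k => Po k lam), ← tsum_mul_left]
  congr 1
  funext k
  unfold fA indA aa Po
  rw [Set.indicator_apply, Set.indicator_apply]
  split <;> ring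


lemma aa_zero : aa lam 0 = 1 := by simp [aa]

lemma aa_succ (m : ℕ) : lam * aa lam m = (m + 1 : ℝ) * aa lam (m + 1) := by
  unfold aa
  rw [Nat.factorial_succ, pow_succ]
  push_cast
  have h1 : (Nat.factorial m : ℝ) ≠ 0 := Nat.cast_ne_zero.2 (Nat.factorial_ne_zero m)
  have h2 : (m : ℝ) + 1 ≠ 0 := by positivity
  field_simp

lemma S_succ (j : ℕ) : S lam (j + 1) = S lam j + aa lam (j + 1) :=
  Finset.sum_range_succ _ _

lemma psi_succ (j : ℕ) : psi lam A (j + 1) = psi lam A j + fA lam A (j + 1) :=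
  Finset.sum_range_succ _ _

lemma summable_R (lam : ℝ) (j : ℕ) : Summable (fun m => aa lam (m + (j + 1))) :=
  (summable_nat_add_iff (j + 1)).2 (summable_aa lam)

lemma summable_tau (hl : 0 ≤ lam) (A : Set ℕ) (j : ℕ) :
    Summable (fun m => fA lam A (m + (j + 1))) :=
  (summable_nat_add_iff (j + 1)).2 (summable_fA hl A)

lemma R_succ (hl : 0 ≤ lam) (j : ℕ) : R lam j = aa lam (j + 1) + R lam (j + 1) := by
  unfold R
  rw [tsum_eq_zero_add' (by simpa [add_assoc, add_comm, add_left_comm] using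
    (summable_nat_add_iff 1).2 (summable_R lam j))]
  · congr 1
    · norm_num
    · congr 1; funext m; congr 1; omega

lemma tau_succ (hl : 0 ≤ lam) (j : ℕ) :
    tau lam A j = fA lam A (j + 1) + tau lam A (j + 1) := by
  unfold tau
  rw [tsum_eq_zero_add' (by simpa [add_assoc, add_comm, add_left_comm] using
    (summable_nat_add_iff 1).2 (summable_tau hl A j))]
  · congr 1
    · norm_num
    · congr 1; funext m; congr 1; omega

lemma R_nonneg (hl : 0 ≤ lam) (j : ℕ) : 0 ≤ R lam j :=
  tsum_nonneg (fun m => aa_nonneg hl _)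

lemma tau_nonneg (hl : 0 ≤ lam) (j : ℕ) : 0 ≤ tau lam A j :=
  tsum_nonneg (fun m => mul_nonneg (indA_nonneg _ _) (aa_nonneg hl _))

lemma S_nonneg (hl : 0 ≤ lam) (j : ℕ) : 0 ≤ S lam j :=
  Finset.sum_nonneg (fun m _ => aa_nonneg hl m)

lemma psi_nonneg (hl : 0 ≤ lam) (j : ℕ) : 0 ≤ psi lam A j :=
  Finset.sum_nonneg (fun m _ => mul_nonneg (indA_nonneg _ _) (aa_nonneg hl _))

lemma fA_le_aa (hl : 0 ≤ lam) (m : ℕ) : fA lam A m ≤ aa lam m := by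
  calc fA lam A m ≤ 1 * aa lam m :=
        mul_le_mul_of_nonneg_right (indA_le_one A m) (aa_nonneg hl m)
    _ = aa lam m := one_mul _

lemma psi_le_S (hl : 0 ≤ lam) (j : ℕ) : psi lam A j ≤ S lam j :=
  Finset.sum_le_sum (fun m _ => fA_le_aa hl m)

lemma tau_le_R (hl : 0 ≤ lam) (j : ℕ) : tau lam A j ≤ R lam j :=
  Summable.tsum_le_tsum (fun m => fA_le_aa hl _) (summable_tau hl A j) (summable_R lam j)

/-- K1 : (j+1) R_{j+1} ≤ lam ⬝ R_j -/
lemma K1 (hl : 0 ≤ lam) (j : ℕ) : (j + 1 : ℝ) * R lam (j + 1) ≤ lam * R lam j := by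
  unfold R
  rw [← tsum_mul_left, ← tsum_mul_left]
  refine Summable.tsum_le_tsum (fun m => ?_) ((summable_R lam (j+1)).mul_left _)
    ((summable_R lam j).mul_left _)
  have h := aa_succ (lam := lam) (m + (j + 1))
  have hrw : m + (j + 1) + 1 = m + (j + 1 + 1) := by omega
  rw [hrw] at h
  rw [h]
  have : (j + 1 : ℝ) ≤ (m + (j + 1) + 1 : ℕ) := by push_cast; linarith [Nat.cast_nonneg (α := ℝ) m]
  have h2 : ((m + (j + 1) + 1 : ℕ) : ℝ) = (m : ℝ) + (j + 1) + 1 := by push_cast; ring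
  calc (j + 1 : ℝ) * aa lam (m + (j + 1 + 1))
      ≤ ((m : ℝ) + (j + 1) + 1) * aa lam (m + (j + 1 + 1)) := by
        apply mul_le_mul_of_nonneg_right _ (aa_nonneg hl _)
        linarith [Nat.cast_nonneg (α := ℝ) m]
    _ = _ := by push_cast; ring

/-- K2 : lam ⬝ S_j ≤ (j+1) S_{j+1} -/
lemma K2 (hl : 0 ≤ lam) (j : ℕ) : lam * S lam j ≤ (j + 1 : ℝ) * S lam (j + 1) := by
  unfold S
  rw [Finset.mul_sum, Finset.mul_sum]
  have h1 : ∑ m ∈ Finset.range (j + 1), lam * aa lam m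
      = ∑ m ∈ Finset.range (j + 1), ((m : ℝ) + 1) * aa lam (m + 1) := by
    refine Finset.sum_congr rfl (fun m _ => ?_); exact aa_succ m
  rw [h1]
  have h2 : ∑ m ∈ Finset.range (j + 1), ((m : ℝ) + 1) * aa lam (m + 1)
      = ∑ m ∈ Finset.range (j + 2), (m : ℝ) * aa lam m := by
    rw [Finset.sum_range_succ' (fun m => (m : ℝ) * aa lam m) (j + 1)]
    push_cast
    simp
  rw [h2]
  refine Finset.sum_le_sum (fun m hm => ?_)
  have : (m : ℝ) ≤ (j : ℝ) + 1 := by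
    have := Finset.mem_range.1 hm; exact_mod_cast Nat.lt_succ_iff.1 (by omega)
  exact mul_le_mul_of_nonneg_right this (aa_nonneg hl m)

lemma steinChen_succ_def (lam : ℝ) (A : Set ℕ) (j : ℕ) :
    steinChen (j + 1) lam A
      = lam⁻¹ * ((j : ℝ) * steinChen j lam A + indA A j - PoSet A lam)
        + (1 / ((j : ℝ) + 1)) * (if lam = 0 then (1 : ℝ) else 0)
          * (indA A 0 - indA A (j + 1)) := rfl

lemma fA_eq (m : ℕ) : fA lam A m = indA A m * aa lam m := rfl

lemma steinChen_eq (hl : 0 < lam) (A : Set ℕ) (j : ℕ) :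
    steinChen (j + 1) lam A
      = (Nat.factorial j * Real.exp (-lam) / lam ^ (j + 1))
          * (psi lam A j * R lam j - tau lam A j * S lam j) := by
  have hl' : 0 ≤ lam := le_of_lt hl
  have hlne : lam ≠ 0 := ne_of_gt hl
  have hexp : Real.exp lam ≠ 0 := (Real.exp_pos lam).ne'
  induction j with
  | zero =>
    rw [steinChen_succ_def, if_neg hlne, PoSet_eq hl' A, ← psi_add_tau hl' 0]
    have hR : R lam 0 = Real.exp lam - S lam 0 := by linarith [S_add_R (lam := lam) hl' 0]
    have hS : S lam 0 = 1 := by simp [S, aa_zero]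
    have hpsi : psi lam A 0 = indA A 0 := by simp [psi, fA, aa_zero]
    rw [hR, hS, hpsi, Real.exp_neg]
    simp only [steinChen]
    field_simp
    ring
  | succ j ih =>
    rw [steinChen_succ_def, if_neg hlne, ih, PoSet_eq hl' A, ← psi_add_tau hl' (j + 1)]
    rw [psi_succ, S_succ, tau_succ hl' j, fA_eq]
    have hRs : R lam (j + 1) = Real.exp lam - S lam j - aa lam (j + 1) := by
      have h1 := S_add_R (lam := lam) hl' (j + 1)
      rw [S_succ] at h1
      linarith
    rw [hRs]
    have hRj : R lam j = Real.exp lam - S lam j := by linarith [S_add_R (lam := lam) hl' j]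
    rw [hRj]
    have haa : aa lam (j + 1) = lam ^ (j + 1) / ((Nat.factorial (j + 1) : ℝ)) := rfl
    rw [haa]
    have hfact : (Nat.factorial (j + 1) : ℝ) = ((j : ℝ) + 1) * Nat.factorial j := by
      rw [Nat.factorial_succ]; push_cast; ring
    rw [hfact, Real.exp_neg]
    have hfne : (Nat.factorial j : ℝ) ≠ 0 := Nat.cast_ne_zero.2 (Nat.factorial_ne_zero j)
    have hj1 : ((j : ℝ) + 1) ≠ 0 := by positivity
    have hpow : lam ^ (j + 1 + 1) = lam ^ (j + 1) * lam := pow_succ lam (j + 1)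
    rw [hpow]
    field_simp
    push_cast
    ring

/-- Pure algebra core bound. -/
lemma core_bound (l a ε ψ τ Sj Rj1 E j1 : ℝ) (hj : 0 < j1)
    (ha0 : 0 ≤ a) (hε0 : 0 ≤ ε) (hε1 : ε ≤ 1) (hψ0 : 0 ≤ ψ) (hτ0 : 0 ≤ τ)
    (hψS : ψ ≤ Sj) (hτR : τ ≤ Rj1) (hS0 : 0 ≤ Sj) (hR0 : 0 ≤ Rj1) (hl0 : 0 ≤ l)
    (hk1 : j1 * Rj1 ≤ l * (a + Rj1)) (hk2 : l * Sj ≤ j1 * (Sj + a))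
    (hE : Sj + a + Rj1 = E) :
    |j1 * ((ψ + ε * a) * Rj1 - τ * (Sj + a)) - l * (ψ * (a + Rj1) - (ε * a + τ) * Sj)|
      ≤ j1 * a * E := by
  have hDform : j1 * ((ψ + ε * a) * Rj1 - τ * (Sj + a)) - l * (ψ * (a + Rj1) - (ε * a + τ) * Sj)
      = ψ * (j1 * Rj1 - l * (a + Rj1)) + τ * (l * Sj - j1 * (Sj + a))
        + ε * a * (j1 * Rj1 + l * Sj) := by ring
  have hub0 : j1 * Rj1 + l * Sj ≤ j1 * E := by nlinarith
  have hnn : 0 ≤ j1 * Rj1 + l * Sj := by positivity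
  rw [hDform, abs_le]
  constructor
  · have h1 : Sj * (j1 * Rj1 - l * (a + Rj1)) ≤ ψ * (j1 * Rj1 - l * (a + Rj1)) :=
      mul_le_mul_of_nonpos_right hψS (by linarith)
    have h2 : Rj1 * (l * Sj - j1 * (Sj + a)) ≤ τ * (l * Sj - j1 * (Sj + a)) :=
      mul_le_mul_of_nonpos_right hτR (by linarith)
    have h3 : (0:ℝ) ≤ ε * a * (j1 * Rj1 + l * Sj) := by positivity
    have hkey : Sj * (j1 * Rj1 - l * (a + Rj1)) + Rj1 * (l * Sj - j1 * (Sj + a))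
        = -(a * (j1 * Rj1 + l * Sj)) := by ring
    have hfin : a * (j1 * Rj1 + l * Sj) ≤ j1 * a * E := by
      nlinarith [mul_le_mul_of_nonneg_left hub0 ha0]
    linarith
  · have h1 : ψ * (j1 * Rj1 - l * (a + Rj1)) ≤ 0 :=
      mul_nonpos_of_nonneg_of_nonpos hψ0 (by linarith)
    have h2 : τ * (l * Sj - j1 * (Sj + a)) ≤ 0 :=
      mul_nonpos_of_nonneg_of_nonpos hτ0 (by linarith)
    have h3 : ε * a * (j1 * Rj1 + l * Sj) ≤ j1 * a * E := by
      nlinarith [mul_le_mul_of_nonneg_right hε1 (mul_nonneg ha0 hnn),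
        mul_le_mul_of_nonneg_left hub0 ha0]
    linarith

lemma abs_steinChen_succ_sub (hl : 0 < lam) (A : Set ℕ) (j : ℕ) :
    |steinChen (j + 2) lam A - steinChen (j + 1) lam A| ≤ 1 / lam := by
  have hl' : 0 ≤ lam := le_of_lt hl
  have hlne : lam ≠ 0 := ne_of_gt hl
  have hfne : (Nat.factorial j : ℝ) ≠ 0 := Nat.cast_ne_zero.2 (Nat.factorial_ne_zero j)
  have hexp : Real.exp lam ≠ 0 := (Real.exp_pos lam).ne'
  have hdiff : steinChen (j + 2) lam A - steinChen (j + 1) lam A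
      = (Nat.factorial j * Real.exp (-lam) / lam ^ (j + 2))
        * (((j : ℝ) + 1) * ((psi lam A j + indA A (j + 1) * aa lam (j + 1)) * R lam (j + 1)
              - tau lam A (j + 1) * (S lam j + aa lam (j + 1)))
          - lam * (psi lam A j * (aa lam (j + 1) + R lam (j + 1))
              - (indA A (j + 1) * aa lam (j + 1) + tau lam A (j + 1)) * S lam j)) := by
    have e1 := steinChen_eq hl A (j + 1)
    rw [psi_succ, S_succ, fA_eq] at e1
    have e2 := steinChen_eq hl A j
    rw [R_succ hl' j, tau_succ hl' j, fA_eq] at e2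
    rw [e1, e2]
    have hfact : (Nat.factorial (j + 1) : ℝ) = ((j : ℝ) + 1) * Nat.factorial j := by
      rw [Nat.factorial_succ]; push_cast; ring
    rw [hfact]
    have hpow1 : lam ^ (j + 1 + 1) = lam ^ (j + 1) * lam := pow_succ lam (j + 1)
    rw [hpow1]
    field_simp
  have hbound := core_bound lam (aa lam (j + 1)) (indA A (j + 1)) (psi lam A j)
      (tau lam A (j + 1)) (S lam j) (R lam (j + 1)) (Real.exp lam) ((j : ℝ) + 1)
      (by positivity) (aa_nonneg hl' _) (indA_nonneg _ _) (indA_le_one _ _)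
      (psi_nonneg hl' j) (tau_nonneg hl' _) (psi_le_S hl' j) (tau_le_R hl' (j + 1))
      (S_nonneg hl' j) (R_nonneg hl' (j + 1)) hl'
      (by rw [← R_succ hl' j]; exact K1 hl' j)
      (by rw [← S_succ j]; exact K2 hl' j)
      (by have h1 := S_add_R (lam := lam) hl' (j + 1); rw [S_succ] at h1; linarith)
  rw [hdiff, abs_mul]
  have hC : |(Nat.factorial j : ℝ) * Real.exp (-lam) / lam ^ (j + 2)|
      = (Nat.factorial j : ℝ) * Real.exp (-lam) / lam ^ (j + 2) := by
    rw [abs_of_nonneg]; positivity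
  rw [hC]
  calc (Nat.factorial j : ℝ) * Real.exp (-lam) / lam ^ (j + 2) * |_|
      ≤ (Nat.factorial j : ℝ) * Real.exp (-lam) / lam ^ (j + 2)
        * (((j : ℝ) + 1) * aa lam (j + 1) * Real.exp lam) := by
        exact mul_le_mul_of_nonneg_left hbound (by positivity)
    _ = 1 / lam := by
        unfold aa
        rw [Real.exp_neg]
        have hfact : (Nat.factorial (j + 1) : ℝ) = ((j : ℝ) + 1) * Nat.factorial j := by
          rw [Nat.factorial_succ]; push_cast; ring
        have hfne1 : (Nat.factorial (j + 1) : ℝ) ≠ 0 :=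
          Nat.cast_ne_zero.2 (Nat.factorial_ne_zero _)
        have hpow : lam ^ (j + 2) = lam ^ (j + 1) * lam := pow_succ lam (j + 1)
        rw [hpow, hfact]
        field_simp


/-- Stein equation pointwise. -/
lemma stein_pt (hl : lam ≠ 0) (A : Set ℕ) (k : ℕ) :
    indA A k - PoSet A lam
      = lam * steinChen (k + 1) lam A - (k : ℝ) * steinChen k lam A := by
  rw [steinChen_succ_def, if_neg hl]
  field_simp
  ring

section Prob

open MeasureTheory

variable {Ω : Type*} [MeasurableSpace Ω] {μ : Measure Ω} [IsProbabilityMeasure μ]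
variable {Bs : Set Ω} {V : Ω → ℕ} {N : ℕ}

lemma expand_eq (hb : ∀ ω, V ω < N) (f : ℕ → ℝ) :
    (fun ω => Bs.indicator (fun _ => (1:ℝ)) ω * f (V ω))
      = (fun ω => ∑ k ∈ Finset.range N, (Bs ∩ V ⁻¹' {k}).indicator (fun _ => f k) ω) := by
  classical
  funext ω
  rw [Finset.sum_eq_single (V ω)]
  · rw [Set.indicator_apply, Set.indicator_apply]
    by_cases h : ω ∈ Bs
    · simp [h, Set.mem_inter_iff]
    · simp [h, Set.mem_inter_iff]
  · intro k _ hk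
    rw [Set.indicator_apply, if_neg]
    rintro ⟨-, hmem⟩
    exact hk (Set.mem_singleton_iff.1 hmem).symm
  · intro hmem
    exact absurd (Finset.mem_range.2 (hb ω)) hmem

lemma integrable_expand (hBs : MeasurableSet Bs) (hV : Measurable V)
    (hb : ∀ ω, V ω < N) (f : ℕ → ℝ) :
    Integrable (fun ω => Bs.indicator (fun _ => (1:ℝ)) ω * f (V ω)) μ := by
  rw [expand_eq hb f]
  exact integrable_finset_sum _ (fun k _ =>
    (integrable_const (f k)).indicator (hBs.inter (hV (measurableSet_singleton k))))

lemma integral_expand (hBs : MeasurableSet Bs) (hV : Measurable V)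
    (hb : ∀ ω, V ω < N) (f : ℕ → ℝ) :
    ∫ ω, Bs.indicator (fun _ => (1:ℝ)) ω * f (V ω) ∂μ
      = ∑ k ∈ Finset.range N, f k * (μ (Bs ∩ V ⁻¹' {k})).toReal := by
  rw [expand_eq hb f, integral_finset_sum _ (fun k _ =>
    (integrable_const (f k)).indicator (hBs.inter (hV (measurableSet_singleton k))))]
  refine Finset.sum_congr rfl fun k _ => ?_
  rw [integral_indicator_const _ (hBs.inter (hV (measurableSet_singleton k))),
    smul_eq_mul, mul_comm, measureReal_def]

lemma integrable_comp (hV : Measurable V) (hb : ∀ ω, V ω < N) (f : ℕ → ℝ) :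
    Integrable (fun ω => f (V ω)) μ := by
  have h := integrable_expand (μ := μ) MeasurableSet.univ hV hb f
  simpa [Set.indicator_univ] using h

lemma integral_comp (hV : Measurable V) (hb : ∀ ω, V ω < N) (f : ℕ → ℝ) :
    ∫ ω, f (V ω) ∂μ = ∑ k ∈ Finset.range N, f k * (μ (V ⁻¹' {k})).toReal := by
  have h := integral_expand (μ := μ) MeasurableSet.univ hV hb f
  simpa [Set.indicator_univ, Set.univ_inter] using h

end Prob

end SCaux

namespace SCaux

lemma Po_zero (k : ℕ) : Po k 0 = if k = 0 then (1:ℝ) else 0 := by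
  cases k with
  | zero => simp [Po]
  | succ m => simp [Po]

lemma PoSet_zero (A : Set ℕ) [Decidable (0 ∈ A)] : PoSet A 0 = if 0 ∈ A then (1:ℝ) else 0 := by
  classical
  unfold PoSet
  by_cases h0 : 0 ∈ A
  · rw [if_pos h0]
    rw [tsum_eq_single (⟨0, h0⟩ : A) ?h]
    · simp [Po_zero]
    case h =>
      intro b hb
      rw [Po_zero, if_neg]
      intro hb0
      exact hb (Subtype.ext hb0)
  · rw [if_neg h0]
    have hz : ∀ b : A, Po (b : ℕ) 0 = 0 := by
      intro b
      rw [Po_zero, if_neg]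
      intro hb0
      exact h0 (hb0 ▸ b.2)
    calc ∑' (b : A), Po (b : ℕ) 0 = ∑' (_ : A), (0:ℝ) := tsum_congr hz
      _ = 0 := tsum_zero

end SCaux


open SCaux in
/-- Unconditional Stein-Chen bound: for mutually independent events B_0,...,B_n,
W = Σ_i 1_{B_i} and lam = Σ_i P(B_i), for every A ⊆ ℕ,
|P({W ∈ A}) - Po(A;lam)| ≤ max_i P(B_i). -/
theorem steinChen_unconditional
    {Ω : Type*} [MeasurableSpace Ω]
    (μ : Measure Ω) [IsProbabilityMeasure μ]
    (n : ℕ) (B : Fin (n + 1) → Set Ω) (hBmeas : ∀ i, MeasurableSet (B i))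
    (hBindep : ProbabilityTheory.iIndepSet B μ)
    (W : Ω → ℕ) (hW : W = fun ω => ∑ i, (B i).indicator (fun _ => (1 : ℕ)) ω)
    (lam : ℝ) (hlam : lam = ∑ i, (μ (B i)).toReal)
    (A : Set ℕ) :
    |(μ {ω | W ω ∈ A}).toReal - PoSet A lam| ≤ ⨆ i, (μ (B i)).toReal := by
  classical
  set p : Fin (n + 1) → ℝ := fun i => (μ (B i)).toReal with hp
  have hp0 : ∀ i, 0 ≤ p i := fun i => ENNReal.toReal_nonneg
  have hlam0 : 0 ≤ lam := hlam ▸ Finset.sum_nonneg (fun i _ => ENNReal.toReal_nonneg)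
  have hbdd : BddAbove (Set.range p) := Set.Finite.bddAbove (Set.finite_range p)
  have hsupP : ∀ i, p i ≤ ⨆ i, p i := fun i => le_ciSup hbdd i
  have hsup0 : 0 ≤ ⨆ i, p i := le_trans (hp0 0) (hsupP 0)
  have hWm : Measurable W := by
    rw [hW]
    exact Finset.measurable_sum _ (fun i _ => measurable_const.indicator (hBmeas i))
  rcases eq_or_lt_of_le hlam0 with hl0 | hlpos
  · -- lam = 0
    have hsum0 : ∑ i, p i = 0 := by rw [← hlam, ← hl0]
    have hz : ∀ i, p i = 0 := by
      intro i
      exact (Finset.sum_eq_zero_iff_of_nonneg (fun j _ => hp0 j)).1 hsum0 i (Finset.mem_univ i)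
    have hz' : ∀ i, μ (B i) = 0 := by
      intro i
      have h := hz i
      rw [hp] at h
      simp only at h
      rwa [ENNReal.toReal_eq_zero_iff, or_iff_left (measure_ne_top μ _)] at h
    have hU : μ (⋃ i, B i) = 0 := measure_iUnion_null hz'
    have hW0 : ∀ ω, ω ∉ (⋃ i, B i) → W ω = 0 := by
      intro ω hω
      rw [hW]
      exact Finset.sum_eq_zero (fun i _ =>
        Set.indicator_of_notMem (fun h => hω (Set.mem_iUnion.2 ⟨i, h⟩)) _)
    have hPoz : PoSet A lam = if 0 ∈ A then (1:ℝ) else 0 := by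
      rw [← hl0]; exact PoSet_zero A
    have hsupz : (⨆ i, p i) = 0 := by
      have : p = fun _ => (0:ℝ) := funext hz
      rw [this, ciSup_const]
    rw [hsupz]
    by_cases h0A : 0 ∈ A
    · have hsub : (⋃ i, B i)ᶜ ⊆ {ω | W ω ∈ A} := by
        intro ω hω
        simp only [Set.mem_setOf_eq]
        rw [hW0 ω hω]
        exact h0A
      have h1 : μ {ω | W ω ∈ A} = 1 := by
        refine le_antisymm prob_le_one ?_
        calc (1 : ENNReal) = μ ((⋃ i, B i)ᶜ) := by
              rw [measure_compl (MeasurableSet.iUnion (fun i => hBmeas i)) (measure_ne_top μ _),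
                hU, measure_univ, tsub_zero]
          _ ≤ μ {ω | W ω ∈ A} := measure_mono hsub
      rw [h1, hPoz]
      simp [h0A]
    · have hsub : {ω | W ω ∈ A} ⊆ ⋃ i, B i := by
        intro ω hω
        by_contra hc
        rw [Set.mem_setOf_eq, hW0 ω hc] at hω
        exact h0A hω
      have h1 : μ {ω | W ω ∈ A} = 0 := measure_mono_null hsub hU
      rw [h1, hPoz]
      simp [h0A]
  · -- lam > 0
    have hlne : lam ≠ 0 := ne_of_gt hlpos
    set g : ℕ → ℝ := fun k => steinChen k lam A with hg
    set indN : Fin (n + 1) → Ω → ℕ := fun i => (B i).indicator (fun _ => (1:ℕ)) with hindN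
    set V : Fin (n + 1) → Ω → ℕ := fun i ω => ∑ j ∈ Finset.univ.erase i, indN j ω with hVdef
    have hindNm : ∀ i, Measurable (indN i) := fun i => measurable_const.indicator (hBmeas i)
    have hVm : ∀ i, Measurable (V i) := fun i =>
      Finset.measurable_sum _ (fun j _ => hindNm j)
    have hindle : ∀ i ω, indN i ω ≤ 1 := by
      intro i ω
      by_cases h : ω ∈ B i <;> simp [hindN, Set.indicator_apply, h]
    have hWV : ∀ i ω, W ω = V i ω + indN i ω := by
      intro i ω
      rw [hW]
      exact (Finset.sum_erase_add _ _ (Finset.mem_univ i)).symm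
    have hVle : ∀ i ω, V i ω ≤ n := by
      intro i ω
      have hle : V i ω ≤ (Finset.univ.erase i).card • 1 :=
        Finset.sum_le_card_nsmul _ _ 1 (fun j _ => hindle j ω)
      have hcard : (Finset.univ.erase i).card = n := by
        rw [Finset.card_erase_of_mem (Finset.mem_univ i), Finset.card_univ, Fintype.card_fin]
        omega
      rw [hcard, smul_eq_mul, mul_one] at hle
      exact hle
    have hVlt : ∀ i ω, V i ω < n + 1 := fun i ω => Nat.lt_succ_of_le (hVle i ω)
    have hWlt : ∀ ω, W ω < n + 2 := by
      intro ω
      have h1 := hWV 0 ω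
      have h2 := hVle 0 ω
      have h3 := hindle 0 ω
      omega
    -- independence
    have hiInd : ProbabilityTheory.iIndepFun indN μ :=
      hBindep.iIndepFun_indicator
    have hInd : ∀ i, ProbabilityTheory.IndepFun (V i) (indN i) μ := by
      intro i
      have h := hiInd.indepFun_finset_sum_of_notMem hindNm (Finset.notMem_erase i Finset.univ)
      have hVe : V i = ∑ j ∈ Finset.univ.erase i, indN j := by
        funext ω
        rw [hVdef]
        simp [Finset.sum_apply]
      rwa [← hVe] at h
    have hBpre : ∀ i, B i = indN i ⁻¹' {1} := by
      intro i
      ext ω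
      by_cases h : ω ∈ B i <;> simp [hindN, Set.indicator_apply, h]
    have hqmul : ∀ i k, μ (B i ∩ V i ⁻¹' {k}) = μ (B i) * μ (V i ⁻¹' {k}) := by
      intro i k
      have h := (hInd i).measure_inter_preimage_eq_mul (s := {k}) (t := {1})
        (measurableSet_singleton k) (measurableSet_singleton 1)
      rw [hBpre i, Set.inter_comm, h, mul_comm]
    set q : Fin (n + 1) → ℕ → ℝ := fun i k => (μ (B i ∩ V i ⁻¹' {k})).toReal with hqdef
    have hqeq : ∀ i k, q i k = p i * (μ (V i ⁻¹' {k})).toReal := by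
      intro i k
      rw [hqdef]
      simp only
      rw [hqmul i k, ENNReal.toReal_mul]
    have hq0 : ∀ i k, 0 ≤ q i k := fun i k => ENNReal.toReal_nonneg
    -- step 1: LHS as sum
    have hWA : MeasurableSet {ω | W ω ∈ A} := hWm MeasurableSet.of_discrete
    have e1 : (μ {ω | W ω ∈ A}).toReal
        = ∑ k ∈ Finset.range (n + 2), indA A k * (μ (W ⁻¹' {k})).toReal := by
      have h1 : (fun ω => indA A (W ω))
          = fun ω => Set.indicator {ω | W ω ∈ A} (fun _ => (1:ℝ)) ω := by
        funext ω
        unfold indA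
        rw [Set.indicator_apply, Set.indicator_apply]
        by_cases h : W ω ∈ A <;> simp [h]
      have h2 : ∫ ω, indA A (W ω) ∂μ = (μ {ω | W ω ∈ A}).toReal := by
        rw [h1, integral_indicator_const _ hWA, smul_eq_mul, mul_one, measureReal_def]
      rw [← h2]
      exact integral_comp hWm hWlt (indA A)
    have esum1 : ∑ k ∈ Finset.range (n + 2), (μ (W ⁻¹' {k})).toReal = 1 := by
      have h1 := integral_comp (μ := μ) hWm hWlt (fun _ => (1:ℝ))
      simp only [one_mul] at h1
      rw [← h1]
      simp
    -- step 2: Stein identity at the sum level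
    have e2 : (μ {ω | W ω ∈ A}).toReal - PoSet A lam
        = lam * (∑ k ∈ Finset.range (n + 2), g (k + 1) * (μ (W ⁻¹' {k})).toReal)
          - ∑ k ∈ Finset.range (n + 2), (k : ℝ) * g k * (μ (W ⁻¹' {k})).toReal := by
      rw [e1]
      have hterm : ∀ k, indA A k * (μ (W ⁻¹' {k})).toReal
          = (lam * (g (k+1) * (μ (W ⁻¹' {k})).toReal)
              - (k : ℝ) * g k * (μ (W ⁻¹' {k})).toReal)
            + PoSet A lam * (μ (W ⁻¹' {k})).toReal := by
        intro k
        have h := stein_pt hlne A k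
        rw [hg]
        simp only
        linear_combination (μ (W ⁻¹' {k})).toReal * h
      calc ∑ k ∈ Finset.range (n + 2), indA A k * (μ (W ⁻¹' {k})).toReal - PoSet A lam
          = ∑ k ∈ Finset.range (n + 2),
              ((lam * (g (k+1) * (μ (W ⁻¹' {k})).toReal)
                - (k : ℝ) * g k * (μ (W ⁻¹' {k})).toReal)
               + PoSet A lam * (μ (W ⁻¹' {k})).toReal) - PoSet A lam := by
            rw [Finset.sum_congr rfl (fun k _ => hterm k)]
        _ = (∑ k ∈ Finset.range (n + 2), (lam * (g (k+1) * (μ (W ⁻¹' {k})).toReal)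
                - (k : ℝ) * g k * (μ (W ⁻¹' {k})).toReal))
            + PoSet A lam * (∑ k ∈ Finset.range (n + 2), (μ (W ⁻¹' {k})).toReal)
            - PoSet A lam := by
            rw [Finset.sum_add_distrib, Finset.mul_sum]
        _ = ∑ k ∈ Finset.range (n + 2), (lam * (g (k+1) * (μ (W ⁻¹' {k})).toReal)
                - (k : ℝ) * g k * (μ (W ⁻¹' {k})).toReal) := by
            rw [esum1]; ring
        _ = _ := by
            rw [Finset.sum_sub_distrib, ← Finset.mul_sum]
    -- step 3
    have e3 : ∑ k ∈ Finset.range (n + 2), (k : ℝ) * g k * (μ (W ⁻¹' {k})).toReal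
        = ∑ i, ∑ k ∈ Finset.range (n + 1), g (k + 1) * q i k := by
      have h1 : ∫ ω, (fun k : ℕ => (k : ℝ) * g k) (W ω) ∂μ
          = ∑ k ∈ Finset.range (n + 2), (k : ℝ) * g k * (μ (W ⁻¹' {k})).toReal := by
        have := integral_comp (μ := μ) hWm hWlt (fun k : ℕ => (k : ℝ) * g k)
        simpa using this
      rw [← h1]
      have h2 : (fun ω => (fun k : ℕ => (k : ℝ) * g k) (W ω))
          = fun ω => ∑ i, (B i).indicator (fun _ => (1:ℝ)) ω * g (W ω) := by
        funext ω
        simp only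
        rw [← Finset.sum_mul]
        congr 1
        conv_lhs => rw [hW]
        push_cast
        refine Finset.sum_congr rfl (fun i _ => ?_)
        by_cases h : ω ∈ B i <;> simp [Set.indicator_apply, h]
      rw [h2, integral_finset_sum _ (fun i _ => integrable_expand (hBmeas i) hWm hWlt g)]
      refine Finset.sum_congr rfl (fun i _ => ?_)
      have h3 : (fun ω => (B i).indicator (fun _ => (1:ℝ)) ω * g (W ω))
          = fun ω => (B i).indicator (fun _ => (1:ℝ)) ω * ((fun k => g (k + 1)) (V i ω)) := by
        funext ω
        by_cases h : ω ∈ B i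
        · have hind1 : indN i ω = 1 := by simp [hindN, Set.indicator_apply, h]
          have hw : W ω = V i ω + 1 := by rw [hWV i ω, hind1]
          simp [hw]
        · simp [Set.indicator_apply, h]
      rw [h3]
      exact integral_expand (hBmeas i) (hVm i) (hVlt i) (fun k => g (k + 1))
    -- step 4 : per-i difference
    have e4 : ∀ i, (∑ k ∈ Finset.range (n + 2), g (k + 1) * (μ (W ⁻¹' {k})).toReal)
        - (∑ k ∈ Finset.range (n + 1), g (k + 1) * (μ (V i ⁻¹' {k})).toReal)
        = ∑ k ∈ Finset.range (n + 1), (g (k + 2) - g (k + 1)) * q i k := by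
      intro i
      have hA : ∑ k ∈ Finset.range (n + 2), g (k + 1) * (μ (W ⁻¹' {k})).toReal
          = ∫ ω, (fun k => g (k + 1)) (W ω) ∂μ :=
        (integral_comp hWm hWlt _).symm
      have hB : ∑ k ∈ Finset.range (n + 1), g (k + 1) * (μ (V i ⁻¹' {k})).toReal
          = ∫ ω, (fun k => g (k + 1)) (V i ω) ∂μ :=
        (integral_comp (hVm i) (hVlt i) _).symm
      have hsub := integral_sub (μ := μ)
        (integrable_comp hWm hWlt (fun k => g (k + 1)))
        (integrable_comp (hVm i) (hVlt i) (fun k => g (k + 1)))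
      rw [hA, hB, ← hsub]
      have hpt : (fun ω => g (W ω + 1) - g (V i ω + 1))
          = fun ω => (B i).indicator (fun _ => (1:ℝ)) ω
              * ((fun k => g (k + 2) - g (k + 1)) (V i ω)) := by
        funext ω
        by_cases h : ω ∈ B i
        · have hind1 : indN i ω = 1 := by simp [hindN, Set.indicator_apply, h]
          have hw : W ω = V i ω + 1 := by rw [hWV i ω, hind1]
          simp [hw, Set.indicator_apply, h]
        · have hind0 : indN i ω = 0 := by simp [hindN, Set.indicator_apply, h]
          have hw : W ω = V i ω := by rw [hWV i ω, hind0]; omega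
          simp [hw, Set.indicator_apply, h]
      rw [hpt]
      exact integral_expand (hBmeas i) (hVm i) (hVlt i) (fun k => g (k + 2) - g (k + 1))
    -- step 5 : total q mass
    have e5 : ∀ i, ∑ k ∈ Finset.range (n + 1), q i k = p i := by
      intro i
      have h1 := integral_expand (μ := μ) (hBmeas i) (hVm i) (hVlt i) (fun _ => (1:ℝ))
      simp only [mul_one, one_mul] at h1
      rw [← h1]
      rw [integral_indicator_const _ (hBmeas i), smul_eq_mul, mul_one, measureReal_def]
    -- assemble
    have hmain : (μ {ω | W ω ∈ A}).toReal - PoSet A lam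
        = ∑ i, p i * (∑ k ∈ Finset.range (n + 1), (g (k + 2) - g (k + 1)) * q i k) := by
      rw [e2, e3]
      rw [hlam, Finset.sum_mul]
      rw [← Finset.sum_sub_distrib]
      refine Finset.sum_congr rfl (fun i _ => ?_)
      rw [← e4 i]
      have hfac : ∑ k ∈ Finset.range (n + 1), g (k + 1) * q i k
          = p i * ∑ k ∈ Finset.range (n + 1), g (k + 1) * (μ (V i ⁻¹' {k})).toReal := by
        rw [Finset.mul_sum]
        refine Finset.sum_congr rfl (fun k _ => ?_)
        rw [hqeq i k]; ring
      rw [hfac]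
      ring
    rw [hmain]
    have hDi : ∀ i, |∑ k ∈ Finset.range (n + 1), (g (k + 2) - g (k + 1)) * q i k|
        ≤ (1 / lam) * p i := by
      intro i
      calc |∑ k ∈ Finset.range (n + 1), (g (k + 2) - g (k + 1)) * q i k|
          ≤ ∑ k ∈ Finset.range (n + 1), |(g (k + 2) - g (k + 1)) * q i k| :=
            Finset.abs_sum_le_sum_abs _ _
        _ ≤ ∑ k ∈ Finset.range (n + 1), (1 / lam) * q i k := by
            refine Finset.sum_le_sum (fun k _ => ?_)
            rw [abs_mul, abs_of_nonneg (hq0 i k)]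
            refine mul_le_mul_of_nonneg_right ?_ (hq0 i k)
            exact abs_steinChen_succ_sub hlpos A k
        _ = (1 / lam) * p i := by rw [← Finset.mul_sum, e5 i]
    calc |∑ i, p i * (∑ k ∈ Finset.range (n + 1), (g (k + 2) - g (k + 1)) * q i k)|
        ≤ ∑ i, |p i * (∑ k ∈ Finset.range (n + 1), (g (k + 2) - g (k + 1)) * q i k)| :=
          Finset.abs_sum_le_sum_abs _ _
      _ ≤ ∑ i, p i * ((1 / lam) * p i) := by
          refine Finset.sum_le_sum (fun i _ => ?_)
          rw [abs_mul, abs_of_nonneg (hp0 i)]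
          exact mul_le_mul_of_nonneg_left (hDi i) (hp0 i)
      _ ≤ ∑ i, (1 / lam) * (⨆ j, p j) * p i := by
          refine Finset.sum_le_sum (fun i _ => ?_)
          have h1 : p i * ((1 / lam) * p i) = (1 / lam) * p i * p i := by ring
          rw [h1]
          refine mul_le_mul_of_nonneg_right ?_ (hp0 i)
          exact mul_le_mul_of_nonneg_left (hsupP i) (by positivity)
      _ = (1 / lam) * (⨆ j, p j) * lam := by rw [← Finset.mul_sum, ← hlam]
      _ = ⨆ j, p j := by field_simp
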